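/- arXiv:1704.04153 — 3 statements merged into one kernel-verified Lean document; each statement's English description precedes it below -/
import Mathlib

section
/- For a unit vector ψ = Σᵢ cᵢ eᵢ in ℂ^d, the maximum of |⟨ψ, η⟩|² over all unit vectors η supported on at most k-1 basis indices equals exactly the sum of the k-1 largest values among |cᵢ|². Consequently the geometric measure of k-coherence of ψ equals 1 minus the sum of the k-1 largest |cᵢ|². -/
open scoped BigOperators

theorem stmt_1 (d k : ℕ) (hk : 2 ≤ k) (hkd : k ≤ d)
    (ψ : EuclideanSpace ℂ (Fin d)) (hψ : ‖ψ‖ = 1) :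
    IsGreatest
      {x : ℝ | ∃ η : EuclideanSpace ℂ (Fin d), ‖η‖ = 1 ∧
        (∃ I : Finset (Fin d), I.card ≤ k - 1 ∧ ∀ j ∉ I, η j = 0) ∧
        x = ‖(inner ℂ ψ η : ℂ)‖ ^ 2}
      (⨆ J : {J : Finset (Fin d) // J.card = k - 1}, ∑ j ∈ J.1, ‖ψ j‖ ^ 2) ∧
    1 - sSup {x : ℝ | ∃ η : EuclideanSpace ℂ (Fin d), ‖η‖ = 1 ∧
        (∃ I : Finset (Fin d), I.card ≤ k - 1 ∧ ∀ j ∉ I, η j = 0) ∧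
        x = ‖(inner ℂ ψ η : ℂ)‖ ^ 2} =
      1 - ⨆ J : {J : Finset (Fin d) // J.card = k - 1}, ∑ j ∈ J.1, ‖ψ j‖ ^ 2 := by
  have hk1d : k - 1 ≤ d := le_trans (Nat.sub_le k 1) hkd
  have hψsum : ∑ j, ‖ψ j‖ ^ 2 = 1 := by
    have := EuclideanSpace.norm_eq ψ
    rw [hψ] at this
    have h2 : (1 : ℝ) = Real.sqrt (∑ j, ‖ψ j‖ ^ 2) := this
    have := congrArg (· ^ 2) h2
    simpa [Real.sq_sqrt (Finset.sum_nonneg (fun i _ => sq_nonneg _))] using this.symm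
  -- nonempty index type
  obtain ⟨J₀', hJ₀'sub, hJ₀'card⟩ := Finset.exists_subset_card_eq
    (s := (Finset.univ : Finset (Fin d))) (n := k - 1) (by simpa using hk1d)
  haveI : Nonempty {J : Finset (Fin d) // J.card = k - 1} := ⟨⟨J₀', hJ₀'card⟩⟩
  -- the sup is attained at some maximizer
  set f : {J : Finset (Fin d) // J.card = k - 1} → ℝ := fun J => ∑ j ∈ J.1, ‖ψ j‖ ^ 2 with hf
  obtain ⟨J₀, hJ₀max⟩ := Finite.exists_max f
  have hsup : (⨆ J, f J) = f J₀ :=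
    le_antisymm (ciSup_le hJ₀max) (le_ciSup (Finite.bddAbove_range f) J₀)
  -- f J₀ > 0
  have hfJ₀pos : 0 < f J₀ := by
    by_contra h
    push_neg at h
    -- then every J has sum ≤ 0, so all coords in every (k-1)-set are 0
    have hall : ∀ j, ψ j = 0 := by
      intro j
      obtain ⟨J, hjJ, hJsub, hJcard⟩ := Finset.exists_subsuperset_card_eq
        (Finset.singleton_subset_iff.mpr (Finset.mem_univ j))
        (show ({j} : Finset (Fin d)).card ≤ k - 1 by rw [Finset.card_singleton]; omega)
        (by simpa using hk1d)
      have h1 : f ⟨J, hJcard⟩ ≤ 0 := le_trans (hJ₀max _) h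
      have h2 : ‖ψ j‖ ^ 2 ≤ 0 := by
        refine le_trans ?_ h1
        exact Finset.single_le_sum (f := fun j => ‖ψ j‖ ^ 2) (fun i _ => sq_nonneg _)
          (hjJ (Finset.mem_singleton_self j))
      have : ‖ψ j‖ = 0 := by nlinarith [sq_nonneg ‖ψ j‖, norm_nonneg (ψ j)]
      simpa using this
    have : (1:ℝ) = 0 := by
      rw [← hψsum]
      simp [hall]
    norm_num at this
  -- upper bound
  have hub : ∀ x ∈ {x : ℝ | ∃ η : EuclideanSpace ℂ (Fin d), ‖η‖ = 1 ∧
      (∃ I : Finset (Fin d), I.card ≤ k - 1 ∧ ∀ j ∉ I, η j = 0) ∧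
      x = ‖(inner ℂ ψ η : ℂ)‖ ^ 2}, x ≤ ⨆ J, f J := by
    rintro x ⟨η, hη, ⟨I, hIcard, hIsupp⟩, rfl⟩
    obtain ⟨J, hIJ, _, hJcard⟩ := Finset.exists_subsuperset_card_eq
      (Finset.subset_univ I) hIcard (by simpa using hk1d)
    -- truncated ψ
    set φ : EuclideanSpace ℂ (Fin d) := WithLp.toLp 2 (fun j => if j ∈ I then ψ j else 0) with hφ
    have hinner : (inner ℂ ψ η : ℂ) = inner ℂ φ η := by
      rw [PiLp.inner_apply, PiLp.inner_apply]
      refine Finset.sum_congr rfl fun j _ => ?_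
      by_cases hj : j ∈ I
      · simp [hφ, hj]
      · simp [hφ, hj, hIsupp j hj]
    have hφnorm : ‖φ‖ ^ 2 = ∑ j ∈ I, ‖ψ j‖ ^ 2 := by
      rw [EuclideanSpace.norm_eq, Real.sq_sqrt (Finset.sum_nonneg (fun i _ => sq_nonneg _))]
      rw [← Finset.sum_subset (Finset.subset_univ I)
        (fun j _ hj => by simp [hφ, hj])]
      exact Finset.sum_congr rfl fun j hj => by simp [hφ, hj]
    have hcs : ‖(inner ℂ ψ η : ℂ)‖ ^ 2 ≤ ∑ j ∈ I, ‖ψ j‖ ^ 2 := by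
      rw [hinner, ← hφnorm]
      have := norm_inner_le_norm (𝕜 := ℂ) φ η
      rw [hη, mul_one] at this
      exact pow_le_pow_left₀ (norm_nonneg _) this 2
    refine le_trans hcs ?_
    have h1 : ∑ j ∈ I, ‖ψ j‖ ^ 2 ≤ f ⟨J, hJcard⟩ :=
      Finset.sum_le_sum_of_subset_of_nonneg hIJ (fun i _ _ => sq_nonneg _)
    exact le_trans h1 (le_ciSup (Finite.bddAbove_range f) _)
  -- membership : construct η achieving f J₀
  have hmem : (⨆ J, f J) ∈ {x : ℝ | ∃ η : EuclideanSpace ℂ (Fin d), ‖η‖ = 1 ∧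
      (∃ I : Finset (Fin d), I.card ≤ k - 1 ∧ ∀ j ∉ I, η j = 0) ∧
      x = ‖(inner ℂ ψ η : ℂ)‖ ^ 2} := by
    set s := f J₀ with hs
    have hspos : 0 < s := hfJ₀pos
    have hsqrtpos : 0 < Real.sqrt s := Real.sqrt_pos.mpr hspos
    set η : EuclideanSpace ℂ (Fin d) :=
      WithLp.toLp 2 (fun j => if j ∈ J₀.1 then ψ j / (Real.sqrt s : ℂ) else 0) with hηdef
    have hηnorm : ‖η‖ = 1 := by
      rw [EuclideanSpace.norm_eq]
      have : ∑ j, ‖η j‖ ^ 2 = ∑ j ∈ J₀.1, ‖ψ j‖ ^ 2 / s := by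
        rw [← Finset.sum_subset (Finset.subset_univ J₀.1)
          (fun j _ hj => by simp [hηdef, hj])]
        refine Finset.sum_congr rfl fun j hj => ?_
        simp only [hηdef, hj, if_pos]
        rw [norm_div, div_pow]
        congr 1
        rw [Complex.norm_real, Real.norm_of_nonneg (Real.sqrt_nonneg _),
          Real.sq_sqrt hspos.le]
      have hsum' : ∑ j ∈ J₀.1, ‖ψ j‖ ^ 2 = s := rfl
      rw [this, ← Finset.sum_div, hsum', div_self hspos.ne']
      exact Real.sqrt_one
    refine ⟨η, hηnorm, ⟨J₀.1, J₀.2.le, fun j hj => by simp [hηdef, hj]⟩, ?_⟩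
    have hinner : (inner ℂ ψ η : ℂ) = (Real.sqrt s : ℂ) := by
      rw [PiLp.inner_apply]
      have : ∀ j ∈ (Finset.univ : Finset (Fin d)),
          (inner ℂ (ψ j) (η j) : ℂ) = if j ∈ J₀.1 then (‖ψ j‖ ^ 2 : ℝ) / (Real.sqrt s : ℂ) else 0 := by
        intro j _
        by_cases hj : j ∈ J₀.1
        · simp only [hηdef, hj, if_pos]
          rw [RCLike.inner_apply, mul_comm, ← mul_div_assoc]
          congr 1
          exact_mod_cast RCLike.conj_mul (ψ j)
        · simp [hηdef, hj]
      rw [Finset.sum_congr rfl this, Finset.sum_ite_mem, Finset.univ_inter,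
        ← Finset.sum_div]
      rw [show (∑ j ∈ J₀.1, ((‖ψ j‖ ^ 2 : ℝ) : ℂ)) = ((s : ℝ) : ℂ) by
        rw [hs, hf]; push_cast; rfl]
      rw [div_eq_iff (by exact_mod_cast hsqrtpos.ne'), ← Complex.ofReal_mul,
        Real.mul_self_sqrt hspos.le]
    rw [hsup, hinner]
    rw [Complex.norm_real, Real.norm_of_nonneg (Real.sqrt_nonneg _), Real.sq_sqrt hspos.le]
  have hgreat : IsGreatest {x : ℝ | ∃ η : EuclideanSpace ℂ (Fin d), ‖η‖ = 1 ∧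
      (∃ I : Finset (Fin d), I.card ≤ k - 1 ∧ ∀ j ∉ I, η j = 0) ∧
      x = ‖(inner ℂ ψ η : ℂ)‖ ^ 2} (⨆ J, f J) := ⟨hmem, hub⟩
  exact ⟨hgreat, by rw [hgreat.csSup_eq]⟩
end

section
/- Let ψ' = Σ_{i=1}^{k} cᵢ eᵢ ⊗ f_i in ℂ^d ⊗ (ℂ²)^{⊗k}, where all cᵢ ≠ 0, k ≥ 2, {eᵢ} is orthonormal in ℂ^d, and f_i = |0⟩^{⊗(i-1)} ⊗ |1⟩ ⊗ |0⟩^{⊗(k-i)}. Then the reduced density matrix of ψ' on any nonempty proper subset of the k qubit factors is not a rank-one projection (i.e., it is a genuinely mixed state). -/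
set_option maxHeartbeats 800000


open scoped BigOperators

/-- The state `ψ' = ∑ i, c i • (e_i ⊗ f_i)` in `ℂ^d ⊗ (ℂ²)^{⊗k}`, written as a
coefficient function on the product basis `Fin d × (Fin k → Fin 2)`, where
`f_i` is the computational basis state with a `1` in position `i` and `0` elsewhere. -/
noncomputable def psiW (d k : ℕ) (hkd : k ≤ d) (c : Fin k → ℂ) :
    Fin d × (Fin k → Fin 2) → ℂ := fun p =>
  ∑ i : Fin k,
    if p.1 = Fin.castLE hkd i ∧ p.2 = (fun t => if t = i then (1 : Fin 2) else 0) then c i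
    else 0

/-- Combine an assignment on the qubits in `S` with an assignment on the qubits
outside `S` into a full assignment. -/
def combineOn {k : ℕ} (S : Finset (Fin k)) (g : {x : Fin k // x ∈ S} → Fin 2)
    (h : {x : Fin k // x ∉ S} → Fin 2) : Fin k → Fin 2 := fun t =>
  if ht : t ∈ S then g ⟨t, ht⟩ else h ⟨t, ht⟩

lemma psiW_eval (d k : ℕ) (hkd : k ≤ d) (c : Fin k → ℂ) (i : Fin k) :
    psiW d k hkd c (Fin.castLE hkd i, fun t => if t = i then (1 : Fin 2) else 0) = c i := by
  unfold psiW
  rw [Finset.sum_eq_single i]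
  · simp
  · intro b _ hb
    rw [if_neg]
    rintro ⟨h1, -⟩
    exact hb (Fin.castLE_injective hkd h1).symm
  · simp

lemma psiW_ne_zero (d k : ℕ) (hkd : k ≤ d) (c : Fin k → ℂ)
    (p : Fin d × (Fin k → Fin 2)) (hp : psiW d k hkd c p ≠ 0) :
    ∃ i, p.1 = Fin.castLE hkd i ∧ p.2 = (fun t => if t = i then (1 : Fin 2) else 0) := by
  by_contra h
  push_neg at h
  apply hp
  unfold psiW
  apply Finset.sum_eq_zero
  intro i _
  rw [if_neg]
  rintro ⟨h1, h2⟩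
  exact h i h1 h2

/-- The reduced density matrix of `ψ'` on a nonempty proper subset `S` of the `k`
qubit factors (partial trace over the qudit and the qubits outside `S`) is not a
rank-one projection, i.e. it is a genuinely mixed state. -/
theorem stmt_7 (d k : ℕ) (hk : 2 ≤ k) (hkd : k ≤ d)
    (c : Fin k → ℂ) (hc : ∀ i, c i ≠ 0) (hnorm : ∑ i, ‖c i‖ ^ 2 = 1)
    (S : Finset (Fin k)) (hS : S.Nonempty) (hSne : S ≠ Finset.univ) :
    ¬ ∃ v : ({x : Fin k // x ∈ S} → Fin 2) → ℂ,
        (∑ g : {x : Fin k // x ∈ S} → Fin 2, ‖v g‖ ^ 2 = 1) ∧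
        ∀ g g' : {x : Fin k // x ∈ S} → Fin 2,
          (∑ j : Fin d, ∑ h : {x : Fin k // x ∉ S} → Fin 2,
              psiW d k hkd c (j, combineOn S g h) *
                (starRingEnd ℂ) (psiW d k hkd c (j, combineOn S g' h))) =
            v g * (starRingEnd ℂ) (v g') := by
  rintro ⟨v, hv1, hv2⟩
  obtain ⟨i, hi⟩ := hS
  obtain ⟨j, hj⟩ : ∃ j, j ∉ S := by
    by_contra h; push_neg at h; exact hSne (Finset.eq_univ_iff_forall.mpr h)
  set g1 : {x : Fin k // x ∈ S} → Fin 2 := fun x => if x.1 = i then 1 else 0 with hg1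
  set g0 : {x : Fin k // x ∈ S} → Fin 2 := fun _ => 0 with hg0
  -- the diagonal entries are real sums of |·|²
  have hdiag : ∀ g : {x : Fin k // x ∈ S} → Fin 2,
      (∑ m : Fin d, ∑ h : {x : Fin k // x ∉ S} → Fin 2,
          psiW d k hkd c (m, combineOn S g h) *
            (starRingEnd ℂ) (psiW d k hkd c (m, combineOn S g h))) =
      ((∑ m : Fin d, ∑ h : {x : Fin k // x ∉ S} → Fin 2,
          Complex.normSq (psiW d k hkd c (m, combineOn S g h)) : ℝ) : ℂ) := by
    intro g
    push_cast
    simp [Complex.mul_conj]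
  -- a generic positivity lemma for a diagonal entry with one explicit witness
  have hpos : ∀ (g : {x : Fin k // x ∈ S} → Fin 2) (m : Fin k)
      (h : {x : Fin k // x ∉ S} → Fin 2),
      combineOn S g h = (fun t => if t = m then (1 : Fin 2) else 0) →
      v g ≠ 0 := by
    intro g m h hcomb
    have hterm : Complex.normSq (psiW d k hkd c (Fin.castLE hkd m, combineOn S g h)) =
        Complex.normSq (c m) := by
      rw [hcomb, psiW_eval]
    have hsum_pos : 0 < ∑ m' : Fin d, ∑ h' : {x : Fin k // x ∉ S} → Fin 2,
        Complex.normSq (psiW d k hkd c (m', combineOn S g h')) := by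
      have h1 : Complex.normSq (c m) ≤
          ∑ h' : {x : Fin k // x ∉ S} → Fin 2,
            Complex.normSq (psiW d k hkd c (Fin.castLE hkd m, combineOn S g h')) := by
        rw [← hterm]
        exact Finset.single_le_sum
          (f := fun h' => Complex.normSq (psiW d k hkd c (Fin.castLE hkd m, combineOn S g h')))
          (fun _ _ => Complex.normSq_nonneg _) (Finset.mem_univ h)
      have h2 : (∑ h' : {x : Fin k // x ∉ S} → Fin 2,
            Complex.normSq (psiW d k hkd c (Fin.castLE hkd m, combineOn S g h'))) ≤
          ∑ m' : Fin d, ∑ h' : {x : Fin k // x ∉ S} → Fin 2,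
            Complex.normSq (psiW d k hkd c (m', combineOn S g h')) :=
        Finset.single_le_sum
          (f := fun m' => ∑ h' : {x : Fin k // x ∉ S} → Fin 2,
            Complex.normSq (psiW d k hkd c (m', combineOn S g h')))
          (fun _ _ => Finset.sum_nonneg fun _ _ => Complex.normSq_nonneg _)
          (Finset.mem_univ _)
      have := Complex.normSq_pos.mpr (hc m)
      linarith
    have hvg : v g * (starRingEnd ℂ) (v g) ≠ 0 := by
      rw [← hv2 g g, hdiag g]
      exact_mod_cast ne_of_gt hsum_pos
    intro h0
    rw [h0, zero_mul] at hvg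
    exact hvg rfl
  -- v g1 ≠ 0
  have hvg1 : v g1 ≠ 0 := by
    apply hpos g1 i (fun _ => 0)
    funext t
    unfold combineOn
    by_cases ht : t ∈ S
    · simp [ht, hg1]
    · have : t ≠ i := fun e => ht (e ▸ hi)
      simp [ht, this]
  -- v g0 ≠ 0
  have hvg0 : v g0 ≠ 0 := by
    apply hpos g0 j (fun x => if x.1 = j then 1 else 0)
    funext t
    unfold combineOn
    by_cases ht : t ∈ S
    · have : t ≠ j := fun e => hj (e ▸ ht)
      simp [ht, this, hg0]
    · simp [ht]
  -- the off-diagonal entry (g1, g0) vanishes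
  have hoff : (∑ m : Fin d, ∑ h : {x : Fin k // x ∉ S} → Fin 2,
      psiW d k hkd c (m, combineOn S g1 h) *
        (starRingEnd ℂ) (psiW d k hkd c (m, combineOn S g0 h))) = 0 := by
    apply Finset.sum_eq_zero
    intro m _
    apply Finset.sum_eq_zero
    intro h _
    by_contra hz
    have h1 : psiW d k hkd c (m, combineOn S g1 h) ≠ 0 := by
      intro e; exact hz (by rw [e, zero_mul])
    have h2 : psiW d k hkd c (m, combineOn S g0 h) ≠ 0 := by
      intro e; exact hz (by rw [e, map_zero, mul_zero])
    obtain ⟨i1, e1, f1⟩ := psiW_ne_zero d k hkd c _ h1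
    obtain ⟨i2, e2, f2⟩ := psiW_ne_zero d k hkd c _ h2
    simp only at e1 e2 f1 f2
    have hii : i1 = i2 := Fin.castLE_injective hkd (e1 ▸ e2)
    subst hii
    have A : combineOn S g1 h i = combineOn S g0 h i := by rw [f1, f2]
    unfold combineOn at A
    simp [hi, hg1, hg0] at A
  have := hv2 g1 g0
  rw [hoff] at this
  rcases mul_eq_zero.mp this.symm with h | h
  · exact hvg1 h
  · exact hvg0 (by simpa using h)
end

section
/- Strong joint concavity of root fidelity for pure-state ensembles: if ρ = Σᵢ aᵢ |αᵢ⟩⟨αᵢ| and σ = Σᵢ bᵢ |βᵢ⟩⟨βᵢ| with aᵢ, bᵢ ≥ 0, then √F(ρ,σ) ≥ Σᵢ √(aᵢ bᵢ) |⟨αᵢ,βᵢ⟩|, where √F(ρ,σ) = Tr√(√ρ σ √ρ). -/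
open scoped BigOperators ComplexOrder

section SJCHelpers
open Matrix
variable {k l n : Type*} [Fintype k] [Fintype l] [Fintype n]

/-- contraction in the `mulVec` / Euclidean-norm sense -/
def SJC_Ctr (A : Matrix k l ℂ) : Prop :=
  ∀ v : l → ℂ, ‖(WithLp.equiv 2 (k → ℂ)).symm (A.mulVec v)‖ ≤ ‖(WithLp.equiv 2 (l → ℂ)).symm v‖

lemma SJC_dot_aux (B : Matrix k l ℂ) (v : l → ℂ) :
    star (B *ᵥ v) ⬝ᵥ (B *ᵥ v) = star v ⬝ᵥ ((Bᴴ * B) *ᵥ v) := by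
  rw [star_mulVec, Matrix.dotProduct_mulVec, Matrix.dotProduct_mulVec, Matrix.vecMul_vecMul]

lemma SJC_dot_self_eq (v : k → ℂ) :
    star v ⬝ᵥ v = ((‖(WithLp.equiv 2 (k → ℂ)).symm v‖ : ℝ) ^ 2 : ℂ) := by
  have e : star v ⬝ᵥ v = inner ℂ ((WithLp.equiv 2 (k → ℂ)).symm v) ((WithLp.equiv 2 (k → ℂ)).symm v) := by
    rw [dotProduct_comm]; rfl
  rw [e, inner_self_eq_norm_sq_to_K]
  norm_cast

lemma SJC_ctr_of_proj {A : Matrix k l ℂ} {R : Matrix l l ℂ} (hA : Aᴴ * A = R)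
    (hR2 : R * R = R) : SJC_Ctr A := by
  intro v
  have hRh : Rᴴ = R := by rw [← hA, conjTranspose_mul, conjTranspose_conjTranspose, hA]
  have h1 : star (A *ᵥ v) ⬝ᵥ (A *ᵥ v) = star v ⬝ᵥ (R *ᵥ v) := by rw [SJC_dot_aux, hA]
  have h2 : star (R *ᵥ v) ⬝ᵥ (R *ᵥ v) = star v ⬝ᵥ (R *ᵥ v) := by
    rw [SJC_dot_aux]; rw [hRh, hR2]
  set x := (WithLp.equiv 2 (l → ℂ)).symm v with hx
  set y := (WithLp.equiv 2 (l → ℂ)).symm (R *ᵥ v) with hy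
  have hinner : (inner ℂ x y : ℂ) = star v ⬝ᵥ (R *ᵥ v) :=
    (EuclideanSpace.inner_toLp_toLp v (R *ᵥ v)).trans (dotProduct_comm _ _)
  have hyn : ((‖y‖ : ℝ)^2 : ℂ) = inner ℂ x y := by
    rw [hinner, ← h2, SJC_dot_self_eq]
  have hyr : (‖y‖:ℝ)^2 ≤ ‖x‖ * ‖y‖ := by
    have := norm_inner_le_norm (𝕜 := ℂ) x y
    calc (‖y‖:ℝ)^2 = ‖(inner ℂ x y : ℂ)‖ := by
          rw [← hyn]; norm_cast; exact (abs_of_nonneg (by positivity)).symm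
      _ ≤ ‖x‖ * ‖y‖ := this
  have hAv : (‖(WithLp.equiv 2 (k → ℂ)).symm (A *ᵥ v)‖:ℝ)^2 = ‖y‖^2 := by
    have e1 := SJC_dot_self_eq (A *ᵥ v)
    have e2 := SJC_dot_self_eq (R *ᵥ v)
    have : ((‖(WithLp.equiv 2 (k → ℂ)).symm (A *ᵥ v)‖:ℝ)^2 : ℂ) = ((‖y‖:ℝ)^2 : ℂ) := by
      rw [← e1, ← e2, h1, h2]
    exact_mod_cast this
  have hAy : ‖(WithLp.equiv 2 (k → ℂ)).symm (A *ᵥ v)‖ = ‖y‖ := by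
    have := congrArg Real.sqrt hAv
    rwa [Real.sqrt_sq (norm_nonneg _), Real.sqrt_sq (norm_nonneg _)] at this
  rw [hAy]
  rcases eq_or_lt_of_le (norm_nonneg y) with h0 | h0
  · rw [← h0]; exact norm_nonneg x
  · have : ‖y‖ * ‖y‖ ≤ ‖x‖ * ‖y‖ := by nlinarith
    exact le_of_mul_le_mul_right this h0

lemma SJC_ctr_mul {A : Matrix k l ℂ} {B : Matrix l n ℂ} (hA : SJC_Ctr A) (hB : SJC_Ctr B) :
    SJC_Ctr (A * B) := fun v => by
  rw [← Matrix.mulVec_mulVec]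
  exact (hA _).trans (hB v)

lemma SJC_ctr_diagonal [DecidableEq n] {c : n → ℂ} (h : ∀ i, ‖c i‖ ≤ 1) :
    SJC_Ctr (diagonal c) := by
  intro v
  rw [EuclideanSpace.norm_eq, EuclideanSpace.norm_eq]
  apply Real.sqrt_le_sqrt
  apply Finset.sum_le_sum
  intro i _
  simp only [WithLp.equiv_symm_apply, WithLp.ofLp_toLp, Matrix.mulVec_diagonal]
  rw [norm_mul]
  have h1 : ‖c i‖ * ‖v i‖ ≤ ‖v i‖ := by
    have := mul_le_mul_of_nonneg_right (h i) (norm_nonneg (v i)); linarith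
  exact pow_le_pow_left₀ (by positivity) h1 2

lemma SJC_pinv_exists [DecidableEq n] {S : Matrix n n ℂ} (hS : S.PosSemidef) :
    ∃ P Q : Matrix n n ℂ, Pᴴ = P ∧ Q * Q = Q ∧ S * P = Q ∧ P * S = Q ∧ Q * S = S ∧
      P * Q = P ∧ Q * P = P := by
  set V : Matrix n n ℂ := (hS.1.eigenvectorUnitary : Matrix n n ℂ) with hVdef
  set d := hS.1.eigenvalues with hddef
  have hV : star V * V = 1 := mem_unitaryGroup_iff'.mp hS.1.eigenvectorUnitary.2
  have hspec : S = V * diagonal (RCLike.ofReal ∘ d) * star V := hS.1.spectral_theorem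
  have key : ∀ f g : n → ℂ, (V * diagonal f * star V) * (V * diagonal g * star V)
      = V * diagonal (fun i => f i * g i) * star V := by
    intro f g
    calc (V * diagonal f * star V) * (V * diagonal g * star V)
        = V * (diagonal f * ((star V * V) * diagonal g)) * star V := by
          simp only [Matrix.mul_assoc]
      _ = V * diagonal (fun i => f i * g i) * star V := by
          rw [hV, Matrix.one_mul, diagonal_mul_diagonal]
  have hdiag : ∀ {f g : n → ℂ}, f = g → V * diagonal f * star V = V * diagonal g * star V :=
    fun h => by rw [h]
  set gf : n → ℂ := fun i => if d i = 0 then 0 else ((d i)⁻¹ : ℝ) with hgf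
  set ef : n → ℂ := fun i => if d i = 0 then 0 else 1 with hef
  have hsg : star gf = gf := by
    funext i; simp only [hgf, Pi.star_apply]; split_ifs <;> simp
  refine ⟨V * diagonal gf * star V, V * diagonal ef * star V, ?_, ?_, ?_, ?_, ?_, ?_, ?_⟩
  · rw [star_eq_conjTranspose, conjTranspose_mul, conjTranspose_mul,
      conjTranspose_conjTranspose, diagonal_conjTranspose, hsg, Matrix.mul_assoc]
  · exact (key _ _).trans (hdiag (funext fun i => by
      simp only [hef]; split_ifs <;> simp))
  · rw [hspec]
    exact (key _ _).trans (hdiag (funext fun i => by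
      simp only [hgf, hef, Function.comp_apply, RCLike.ofReal_alg]
      split_ifs with h
      · simp [h]
      · simp [Complex.real_smul, ← Complex.ofReal_inv, ← Complex.ofReal_mul,
          mul_inv_cancel₀ h, inv_mul_cancel₀ h]))
  · rw [hspec]
    exact (key _ _).trans (hdiag (funext fun i => by
      simp only [hgf, hef, Function.comp_apply, RCLike.ofReal_alg]
      split_ifs with h
      · simp [h]
      · simp [Complex.real_smul, ← Complex.ofReal_inv, ← Complex.ofReal_mul,
          mul_inv_cancel₀ h, inv_mul_cancel₀ h]))
  · conv_lhs => rw [hspec]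
    rw [key]
    conv_rhs => rw [hspec]
    exact hdiag (funext fun i => by
      simp only [hef, Function.comp_apply]
      split_ifs with h <;> simp [h])
  · exact (key _ _).trans (hdiag (funext fun i => by
      simp only [hgf, hef]; split_ifs <;> simp))
  · exact (key _ _).trans (hdiag (funext fun i => by
      simp only [hgf, hef]; split_ifs <;> simp))

lemma SJC_factor_exists [DecidableEq n] {S : Matrix n n ℂ} (hS : S.PosSemidef)
    (M : Matrix n k ℂ) (hM : M * Mᴴ = S * S) :
    ∃ W : Matrix n k ℂ, M = S * W ∧ SJC_Ctr W ∧ SJC_Ctr Wᴴ := by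
  obtain ⟨P, Q, hPh, hQQ, hSP, hPS, hQS, hPQ, hQP⟩ := SJC_pinv_exists hS
  have hQM : Q * M = M := by
    set N : Matrix n n ℂ := 1 - Q with hN
    have hNS : N * S = 0 := by rw [hN, Matrix.sub_mul, Matrix.one_mul, hQS, sub_self]
    have hz : (N * M) * (N * M)ᴴ = 0 := by
      calc (N * M) * (N * M)ᴴ
          = N * ((M * Mᴴ) * Nᴴ) := by rw [conjTranspose_mul]; simp only [Matrix.mul_assoc]
        _ = (N * S) * (S * Nᴴ) := by rw [hM]; simp only [Matrix.mul_assoc]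
        _ = 0 := by rw [hNS, Matrix.zero_mul]
    have h0 : N * M = 0 := Matrix.self_mul_conjTranspose_eq_zero.mp hz
    have h3 : M - Q * M = 0 := by
      rw [← Matrix.one_mul M, ← Matrix.mul_assoc]
      simpa [hN, Matrix.sub_mul] using h0
    exact (sub_eq_zero.mp h3).symm
  refine ⟨P * M, ?_, ?_, ?_⟩
  · rw [← Matrix.mul_assoc, hSP, hQM]
  · apply SJC_ctr_of_proj (R := Mᴴ * (P * (P * M)))
    · rw [conjTranspose_mul, hPh]; simp only [Matrix.mul_assoc]
    · calc (Mᴴ * (P * (P * M))) * (Mᴴ * (P * (P * M)))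
          = Mᴴ*(P*(P*((M*Mᴴ)*(P*(P*M))))) := by simp only [Matrix.mul_assoc]
        _ = Mᴴ*(P*(((P*S)*(S*P))*(P*M))) := by rw [hM]; simp only [Matrix.mul_assoc]
        _ = Mᴴ*(P*((Q*Q)*(P*M))) := by rw [hPS, hSP]
        _ = Mᴴ*((P*Q)*((Q*P)*M)) := by simp only [Matrix.mul_assoc]
        _ = Mᴴ * (P * (P * M)) := by rw [hPQ, hQP]
  · apply SJC_ctr_of_proj (R := Q)
    · calc (P * M)ᴴᴴ * (P * M)ᴴ
          = (P*(M*Mᴴ))*Pᴴ := by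
            rw [conjTranspose_conjTranspose, conjTranspose_mul]; simp only [Matrix.mul_assoc]
        _ = (P*S)*(S*P) := by rw [hM, hPh]; simp only [Matrix.mul_assoc]
        _ = Q := by rw [hPS, hSP, hQQ]
    · exact hQQ

lemma SJC_trace_ctr_le [DecidableEq n] {T : Matrix n n ℂ} (hT : T.PosSemidef)
    (C : Matrix n n ℂ) (hC : SJC_Ctr C) :
    (Matrix.trace (T * C)).re ≤ T.trace.re := by
  set V : Matrix n n ℂ := (hT.1.eigenvectorUnitary : Matrix n n ℂ) with hVdef
  set d := hT.1.eigenvalues with hddef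
  have hV : star V * V = 1 := mem_unitaryGroup_iff'.mp hT.1.eigenvectorUnitary.2
  have hspec : T = V * diagonal (RCLike.ofReal ∘ d) * star V := hT.1.spectral_theorem
  have hd0 : ∀ i, 0 ≤ d i := hT.eigenvalues_nonneg
  set G := star V * C * V with hG
  have htr : Matrix.trace (T * C) = ∑ i, (d i : ℂ) * G i i := by
    have h1 : Matrix.trace (T * C) = Matrix.trace (diagonal (RCLike.ofReal ∘ d) * G) := by
      rw [hspec, hG]
      rw [Matrix.mul_assoc, Matrix.mul_assoc, trace_mul_comm V]
      simp only [Matrix.mul_assoc]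
    rw [h1, Matrix.trace]
    apply Finset.sum_congr rfl
    intro i _
    simp [Matrix.diag, Matrix.diagonal_mul]
  have htrT : Matrix.trace T = ∑ i, (d i : ℂ) := by
    rw [hspec, Matrix.mul_assoc, trace_mul_comm V, Matrix.mul_assoc, hV, Matrix.mul_one,
      Matrix.trace_diagonal]
    exact Finset.sum_congr rfl fun i _ => rfl
  have hGle : ∀ i, ‖G i i‖ ≤ 1 := by
    intro i
    set c : n → ℂ := fun p => V p i with hc
    have hGdot : G i i = star c ⬝ᵥ (C *ᵥ c) := by
      simp only [hG, Matrix.mul_apply, dotProduct, Matrix.mulVec, Matrix.star_apply,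
        dotProduct, hc, Finset.sum_mul, Finset.mul_sum]
      rw [Finset.sum_comm]
      apply Finset.sum_congr rfl; intro p _
      apply Finset.sum_congr rfl; intro q _
      simp only [Pi.star_apply]
      ring
    have hcol : star c ⬝ᵥ c = 1 := by
      have : (star V * V) i i = (1 : Matrix n n ℂ) i i := by rw [hV]
      simpa [Matrix.mul_apply, dotProduct, Matrix.star_apply, hc,
        Matrix.one_apply] using this
    have hcn : ‖(WithLp.equiv 2 (n → ℂ)).symm c‖ = 1 := by
      have h2 : ((‖(WithLp.equiv 2 (n → ℂ)).symm c‖ : ℝ)^2 : ℂ) = 1 := by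
        rw [← SJC_dot_self_eq, hcol]
      have h3 : (‖(WithLp.equiv 2 (n → ℂ)).symm c‖ : ℝ)^2 = 1 := by exact_mod_cast h2
      nlinarith [norm_nonneg ((WithLp.equiv 2 (n → ℂ)).symm c)]
    rw [hGdot, dotProduct_comm, ← EuclideanSpace.inner_toLp_toLp]
    calc ‖(inner ℂ ((WithLp.equiv 2 (n → ℂ)).symm c)
            ((WithLp.equiv 2 (n → ℂ)).symm (C *ᵥ c)) : ℂ)‖
        ≤ ‖(WithLp.equiv 2 (n → ℂ)).symm c‖ * ‖(WithLp.equiv 2 (n → ℂ)).symm (C *ᵥ c)‖ :=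
          norm_inner_le_norm _ _
      _ ≤ 1 * 1 := by
          apply mul_le_mul (le_of_eq hcn) ((hC c).trans (le_of_eq hcn)) (norm_nonneg _)
            (by norm_num)
      _ = 1 := by norm_num
  rw [htr, htrT]
  simp only [Complex.re_sum]
  apply Finset.sum_le_sum
  intro i _
  have he : ((d i : ℂ) * G i i).re = d i * (G i i).re := by simp [Complex.mul_re]
  rw [he]
  have h4 : (G i i).re ≤ 1 := (Complex.re_le_norm _).trans (hGle i)
  have h5 : (d i : ℂ).re = d i := by simp
  rw [h5]
  calc d i * (G i i).re ≤ d i * 1 := mul_le_mul_of_nonneg_left h4 (hd0 i)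
    _ = d i := mul_one _

lemma SJC_sqrt_props [DecidableEq n] {A : Matrix n n ℂ} (hA : A.PosSemidef) :
    ((hA.1.eigenvectorUnitary : Matrix n n ℂ) * diagonal (fun j => ((Real.sqrt (hA.1.eigenvalues j) : ℝ) : ℂ)) * (star hA.1.eigenvectorUnitary : Matrix n n ℂ)).PosSemidef ∧
    ((hA.1.eigenvectorUnitary : Matrix n n ℂ) * diagonal (fun j => ((Real.sqrt (hA.1.eigenvalues j) : ℝ) : ℂ)) * (star hA.1.eigenvectorUnitary : Matrix n n ℂ)) *
    ((hA.1.eigenvectorUnitary : Matrix n n ℂ) * diagonal (fun j => ((Real.sqrt (hA.1.eigenvalues j) : ℝ) : ℂ)) * (star hA.1.eigenvectorUnitary : Matrix n n ℂ)) = A := by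
  set V : Matrix n n ℂ := (hA.1.eigenvectorUnitary : Matrix n n ℂ) with hVdef
  set D : n → ℂ := fun j => ((Real.sqrt (hA.1.eigenvalues j) : ℝ) : ℂ) with hDdef
  have hV : star V * V = 1 := mem_unitaryGroup_iff'.mp hA.1.eigenvectorUnitary.2
  have hspec : A = V * diagonal (RCLike.ofReal ∘ hA.1.eigenvalues) * star V := hA.1.spectral_theorem
  change (V * diagonal D * star V).PosSemidef ∧ (V * diagonal D * star V) * (V * diagonal D * star V) = A
  constructor
  · have hD : (diagonal D).PosSemidef :=
      PosSemidef.diagonal (fun j => Complex.zero_le_real.mpr (Real.sqrt_nonneg _))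
    rw [Matrix.star_eq_conjTranspose]
    exact hD.mul_mul_conjTranspose_same V
  · calc (V * diagonal D * star V) * (V * diagonal D * star V)
        = V * (diagonal D * ((star V * V) * diagonal D)) * star V := by simp only [Matrix.mul_assoc]
      _ = V * diagonal (RCLike.ofReal ∘ hA.1.eigenvalues) * star V := by
        rw [hV, Matrix.one_mul, diagonal_mul_diagonal]
        have hDD : (fun i => D i * D i) = RCLike.ofReal ∘ hA.1.eigenvalues := by
          funext j
          show D j * D j = ((hA.1.eigenvalues j : ℝ) : ℂ)
          simp only [hDdef]
          rw [← Complex.ofReal_mul, Real.mul_self_sqrt (hA.eigenvalues_nonneg j)]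
        rw [hDD]
      _ = A := hspec.symm

end SJCHelpers

/-- Strong joint concavity of the root fidelity for pure-state ensembles:
if `ρ = ∑ᵢ aᵢ |αᵢ⟩⟨αᵢ|` and `σ = ∑ᵢ bᵢ |βᵢ⟩⟨βᵢ|`, then
`Tr√(√ρ σ √ρ) ≥ ∑ᵢ √(aᵢ bᵢ) |⟨αᵢ,βᵢ⟩|`. -/
theorem stmt_14 (m N : ℕ) (a b : Fin N → ℝ) (ha : ∀ i, 0 ≤ a i) (hb : ∀ i, 0 ≤ b i)
    (α β : Fin N → EuclideanSpace ℂ (Fin m))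
    (hα : ∀ i, ‖α i‖ = 1) (hβ : ∀ i, ‖β i‖ = 1)
    (ρ σ : Matrix (Fin m) (Fin m) ℂ)
    (hρdef : ρ = Matrix.of fun p q => ∑ i, (a i : ℂ) * α i p * (starRingEnd ℂ) (α i q))
    (hσdef : σ = Matrix.of fun p q => ∑ i, (b i : ℂ) * β i p * (starRingEnd ℂ) (β i q))
    (hρ : ρ.PosSemidef)
    (h2 : ((((hρ).1.eigenvectorUnitary : Matrix (Fin m) (Fin m) ℂ) * Matrix.diagonal (fun j => ((Real.sqrt ((hρ).1.eigenvalues j) : ℝ) : ℂ)) * (star (hρ).1.eigenvectorUnitary : Matrix (Fin m) (Fin m) ℂ)) * σ * (((hρ).1.eigenvectorUnitary : Matrix (Fin m) (Fin m) ℂ) * Matrix.diagonal (fun j => ((Real.sqrt ((hρ).1.eigenvalues j) : ℝ) : ℂ)) * (star (hρ).1.eigenvectorUnitary : Matrix (Fin m) (Fin m) ℂ))).PosSemidef) :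
    ∑ i, Real.sqrt (a i * b i) * ‖(inner ℂ (α i) (β i) : ℂ)‖ ≤ ((((h2).1.eigenvectorUnitary : Matrix (Fin m) (Fin m) ℂ) * Matrix.diagonal (fun j => ((Real.sqrt ((h2).1.eigenvalues j) : ℝ) : ℂ)) * (star (h2).1.eigenvectorUnitary : Matrix (Fin m) (Fin m) ℂ)).trace).re := by
  classical
  open Matrix in
  set S : Matrix (Fin m) (Fin m) ℂ := ((hρ).1.eigenvectorUnitary : Matrix (Fin m) (Fin m) ℂ) * Matrix.diagonal (fun j => ((Real.sqrt ((hρ).1.eigenvalues j) : ℝ) : ℂ)) * (star (hρ).1.eigenvectorUnitary : Matrix (Fin m) (Fin m) ℂ) with hSdef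
  set T : Matrix (Fin m) (Fin m) ℂ := ((h2).1.eigenvectorUnitary : Matrix (Fin m) (Fin m) ℂ) * Matrix.diagonal (fun j => ((Real.sqrt ((h2).1.eigenvalues j) : ℝ) : ℂ)) * (star (h2).1.eigenvectorUnitary : Matrix (Fin m) (Fin m) ℂ) with hTdef
  have hS : S.PosSemidef := (SJC_sqrt_props hρ).1
  have hT : T.PosSemidef := (SJC_sqrt_props h2).1
  have hSh : Sᴴ = S := hS.1
  have hSS : S * S = ρ := (SJC_sqrt_props hρ).2
  have hTT : T * T = S * σ * S := (SJC_sqrt_props h2).2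
  set X : Matrix (Fin m) (Fin N) ℂ := Matrix.of fun p i => (Real.sqrt (a i) : ℂ) * α i p
    with hXdef
  set Y : Matrix (Fin m) (Fin N) ℂ := Matrix.of fun p i => (Real.sqrt (b i) : ℂ) * β i p
    with hYdef
  have hXX : X * Xᴴ = ρ := by
    rw [hρdef]
    ext p q
    simp only [Matrix.mul_apply, Matrix.conjTranspose_apply, Matrix.of_apply, hXdef]
    apply Finset.sum_congr rfl
    intro i _
    have hsq : ((Real.sqrt (a i) : ℂ)) * ((Real.sqrt (a i) : ℂ)) = (a i : ℂ) := by
      norm_cast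
      exact Real.mul_self_sqrt (ha i)
    simp only [star_mul', RCLike.star_def, Complex.conj_ofReal]
    rw [← hsq]
    ring
  have hYY : Y * Yᴴ = σ := by
    rw [hσdef]
    ext p q
    simp only [Matrix.mul_apply, Matrix.conjTranspose_apply, Matrix.of_apply, hYdef]
    apply Finset.sum_congr rfl
    intro i _
    have hsq : ((Real.sqrt (b i) : ℂ)) * ((Real.sqrt (b i) : ℂ)) = (b i : ℂ) := by
      norm_cast
      exact Real.mul_self_sqrt (hb i)
    simp only [star_mul', RCLike.star_def, Complex.conj_ofReal]
    rw [← hsq]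
    ring
  obtain ⟨W, hW, hCW, hCWh⟩ := SJC_factor_exists hS X (by rw [hXX, hSS])
  obtain ⟨U, hU, hCU, hCUh⟩ := SJC_factor_exists hT (S * Y) (by
    rw [conjTranspose_mul, hSh, hTT, ← hYY]
    simp only [Matrix.mul_assoc])
  set z : Fin N → ℂ := fun i => (Xᴴ * Y) i i with hzdef
  have hz : ∀ i, z i = (Real.sqrt (a i * b i) : ℂ) * (inner ℂ (α i) (β i) : ℂ) := by
    intro i
    have hab : (Real.sqrt (a i * b i) : ℂ)
        = (Real.sqrt (a i) : ℂ) * (Real.sqrt (b i) : ℂ) := by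
      norm_cast
      exact Real.sqrt_mul (ha i) _
    have hin : (inner ℂ (α i) (β i) : ℂ) = ∑ p, (starRingEnd ℂ) (α i p) * β i p := by
      rw [EuclideanSpace.inner_eq_star_dotProduct]
      simp [dotProduct, mul_comm]
    rw [hzdef, hin, hab]
    simp only [Matrix.mul_apply, Matrix.conjTranspose_apply, Matrix.of_apply, hXdef, hYdef,
      Finset.mul_sum]
    apply Finset.sum_congr rfl
    intro p _
    simp only [star_mul', RCLike.star_def, Complex.conj_ofReal]
    ring
  have hzn : ∀ i, ‖z i‖ = Real.sqrt (a i * b i) * ‖(inner ℂ (α i) (β i) : ℂ)‖ := by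
    intro i
    rw [hz i, norm_mul, Complex.norm_real, Real.norm_eq_abs,
      abs_of_nonneg (Real.sqrt_nonneg _)]
  set c : Fin N → ℂ := fun i => if z i = 0 then 0 else (‖z i‖ : ℂ) / z i with hcdef
  have hcz : ∀ i, c i * z i = (‖z i‖ : ℂ) := by
    intro i
    by_cases h : z i = 0
    · simp [hcdef, h]
    · simp only [hcdef, if_neg h]
      field_simp
  have hcn : ∀ i, ‖c i‖ ≤ 1 := by
    intro i
    by_cases h : z i = 0
    · simp [hcdef, h]
    · simp only [hcdef, if_neg h]
      rw [norm_div, Complex.norm_real, Real.norm_eq_abs, abs_of_nonneg (norm_nonneg _)]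
      rw [div_self (by simpa using h)]
  have hXhY : Xᴴ * Y = Wᴴ * (T * U) := by
    rw [hW, conjTranspose_mul, hSh, Matrix.mul_assoc, hU]
  set C : Matrix (Fin m) (Fin m) ℂ := U * (Matrix.diagonal c * Wᴴ) with hCdef
  have hCC : SJC_Ctr C := SJC_ctr_mul hCU (SJC_ctr_mul (SJC_ctr_diagonal hcn) hCWh)
  have htr1 : Matrix.trace (Matrix.diagonal c * (Xᴴ * Y)) = ∑ i, c i * z i := by
    rw [Matrix.trace]
    apply Finset.sum_congr rfl
    intro i _
    simp [Matrix.diag, Matrix.diagonal_mul, hzdef]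
  have htr2 : Matrix.trace (Matrix.diagonal c * (Xᴴ * Y)) = Matrix.trace (T * C) := by
    rw [hXhY]
    rw [show Matrix.diagonal c * (Wᴴ * (T * U)) = (Matrix.diagonal c * Wᴴ * T) * U from by
      simp only [Matrix.mul_assoc]]
    rw [trace_mul_comm]
    rw [show U * (Matrix.diagonal c * Wᴴ * T) = (U * (Matrix.diagonal c * Wᴴ)) * T from by
      simp only [Matrix.mul_assoc]]
    rw [trace_mul_comm]
  have hsum : ∑ i, Real.sqrt (a i * b i) * ‖(inner ℂ (α i) (β i) : ℂ)‖
      = (Matrix.trace (T * C)).re := by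
    rw [← htr2, htr1]
    rw [show (∑ i, c i * z i) = ∑ i, (‖z i‖ : ℂ) from Finset.sum_congr rfl fun i _ => hcz i]
    rw [Complex.re_sum]
    apply Finset.sum_congr rfl
    intro i _
    rw [Complex.ofReal_re, hzn i]
  rw [hsum]
  exact SJC_trace_ctr_le hT C hCC
end
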